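/- Let a be a real number with 0 < a < 1 and define h(x) = x·(1 + a^x)/(1 − a^x) for x > 0 (powers are real powers). Then for all natural numbers ℓ, m ≥ 1 one has the strict inequalities h(ℓ + m) < h(ℓ) + h(m) and h(ℓ) + h(m) < h(ℓ + m) + 2/log(1/a). -/

import Mathlib

set_option maxHeartbeats 800000

private lemma keyB (u v L M : ℝ) (hu : 1 < u) (hv : 1 < v) (hL : 0 < L) (hM : 0 < M)
    (hLu : L * u < u ^ 2 - 1) (hMv : M * v < v ^ 2 - 1) :
    L / (u ^ 2 - 1) + M / (v ^ 2 - 1) - (L + M) / (u ^ 2 * v ^ 2 - 1) < 1 := by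
  have hA : 0 < u ^ 2 - 1 := by nlinarith
  have hB : 0 < v ^ 2 - 1 := by nlinarith
  have hAB : 0 < u ^ 2 * v ^ 2 - 1 := by nlinarith
  have heq : L / (u ^ 2 - 1) + M / (v ^ 2 - 1) - (L + M) / (u ^ 2 * v ^ 2 - 1)
      = (L * (v ^ 2 - 1) * (u ^ 2 * v ^ 2 - 1) + M * (u ^ 2 - 1) * (u ^ 2 * v ^ 2 - 1)
          - (L + M) * (u ^ 2 - 1) * (v ^ 2 - 1))
        / ((u ^ 2 - 1) * (v ^ 2 - 1) * (u ^ 2 * v ^ 2 - 1)) := by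
    field_simp
  rw [heq, div_lt_one (by positivity)]
  have e1 : L * u ^ 2 * (v ^ 2 - 1) ^ 2 < u * (u ^ 2 - 1) * (v ^ 2 - 1) ^ 2 := by
    have := mul_lt_mul_of_pos_right hLu (by positivity : (0:ℝ) < u * (v ^ 2 - 1) ^ 2)
    nlinarith
  have e2 : M * v ^ 2 * (u ^ 2 - 1) ^ 2 < v * (v ^ 2 - 1) * (u ^ 2 - 1) ^ 2 := by
    have := mul_lt_mul_of_pos_right hMv (by positivity : (0:ℝ) < v * (u ^ 2 - 1) ^ 2)
    nlinarith
  have e3 : 0 ≤ (u ^ 2 - 1) * (v ^ 2 - 1) * ((u * v - 1) * ((u - 1) * (v - 1))) := by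
    have h1 : 0 ≤ u - 1 := by linarith
    have h2 : 0 ≤ v - 1 := by linarith
    have h3 : 0 ≤ u * v - 1 := by nlinarith
    positivity
  nlinarith [e1, e2, e3]

theorem stmt_0 (a : ℝ) (ha0 : 0 < a) (ha1 : a < 1)
    (h : ℝ → ℝ)
    (hh : ∀ x : ℝ, 0 < x → h x = x * (1 + a ^ x) / (1 - a ^ x))
    (ℓ m : ℕ) (hℓ : 1 ≤ ℓ) (hm : 1 ≤ m) :
    h ((ℓ : ℝ) + (m : ℝ)) < h ℓ + h m ∧
    h ℓ + h m < h ((ℓ : ℝ) + (m : ℝ)) + 2 / Real.log (1 / a) := by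
  have hl1 : (1:ℝ) ≤ (ℓ:ℝ) := by exact_mod_cast hℓ
  have hm1 : (1:ℝ) ≤ (m:ℝ) := by exact_mod_cast hm
  have hl0 : (0:ℝ) < (ℓ:ℝ) := by linarith
  have hm0 : (0:ℝ) < (m:ℝ) := by linarith
  set t := Real.log (1 / a) with htdef
  have hloga : Real.log a < 0 := Real.log_neg ha0 ha1
  have htt : t = -Real.log a := by rw [htdef, one_div, Real.log_inv]
  have ht : 0 < t := by rw [htt]; linarith
  set u := Real.exp ((ℓ:ℝ) * t / 2) with hudef
  set v := Real.exp ((m:ℝ) * t / 2) with hvdef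
  have hu : 1 < u := Real.one_lt_exp_iff.2 (by positivity)
  have hv : 1 < v := Real.one_lt_exp_iff.2 (by positivity)
  have hu2 : u ^ 2 = Real.exp ((ℓ:ℝ) * t) := by
    rw [hudef, sq, ← Real.exp_add]; ring_nf
  have hv2 : v ^ 2 = Real.exp ((m:ℝ) * t) := by
    rw [hvdef, sq, ← Real.exp_add]; ring_nf
  have hpu : a ^ (ℓ:ℝ) = 1 / u ^ 2 := by
    rw [hu2, one_div, ← Real.exp_neg, Real.rpow_def_of_pos ha0]
    congr 1; rw [htt]; ring
  have hqv : a ^ (m:ℝ) = 1 / v ^ 2 := by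
    rw [hv2, one_div, ← Real.exp_neg, Real.rpow_def_of_pos ha0]
    congr 1; rw [htt]; ring
  have hpq : a ^ ((ℓ:ℝ) + (m:ℝ)) = 1 / (u ^ 2 * v ^ 2) := by
    rw [hu2, hv2, ← Real.exp_add, one_div, ← Real.exp_neg, Real.rpow_def_of_pos ha0]
    congr 1; rw [htt]; ring
  have hA : 0 < u ^ 2 - 1 := by nlinarith
  have hB : 0 < v ^ 2 - 1 := by nlinarith
  have hAB : 0 < u ^ 2 * v ^ 2 - 1 := by nlinarith
  -- sinh bounds
  have hLu : (ℓ:ℝ) * t * u < u ^ 2 - 1 := by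
    have hs : (ℓ:ℝ) * t / 2 < Real.sinh ((ℓ:ℝ) * t / 2) :=
      Real.self_lt_sinh_iff.2 (by positivity)
    rw [Real.sinh_eq, Real.exp_neg] at hs
    have hu0 : 0 < u := by linarith
    rw [← hudef] at hs
    have := mul_lt_mul_of_pos_right hs hu0
    have hinv : u⁻¹ * u = 1 := inv_mul_cancel₀ hu0.ne'
    nlinarith [this, hinv]
  have hMv : (m:ℝ) * t * v < v ^ 2 - 1 := by
    have hs : (m:ℝ) * t / 2 < Real.sinh ((m:ℝ) * t / 2) :=
      Real.self_lt_sinh_iff.2 (by positivity)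
    rw [Real.sinh_eq, Real.exp_neg] at hs
    have hv0 : 0 < v := by linarith
    rw [← hvdef] at hs
    have := mul_lt_mul_of_pos_right hs hv0
    have hinv : v⁻¹ * v = 1 := inv_mul_cancel₀ hv0.ne'
    nlinarith [this, hinv]
  -- rewrite h values
  rw [hh ((ℓ:ℝ) + (m:ℝ)) (by positivity), hh (ℓ:ℝ) hl0, hh (m:ℝ) hm0, hpu, hqv, hpq]
  -- identities expressing each term
  have id1 : ∀ c w : ℝ, 0 < w ^ 2 - 1 →
      c * (1 + 1 / w ^ 2) / (1 - 1 / w ^ 2) = c + 2 * (c / (w ^ 2 - 1)) := by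
    intro c w hw
    have hw0 : w ^ 2 ≠ 0 := by nlinarith
    have hw0' : w ≠ 0 := by rintro rfl; simp at hw0
    have hw2 : w ^ 2 - 1 ≠ 0 := hw.ne'
    field_simp
    ring
  rw [id1 _ _ hA, id1 _ _ hB]
  have idm : ((ℓ:ℝ) + (m:ℝ)) * (1 + 1 / (u ^ 2 * v ^ 2)) / (1 - 1 / (u ^ 2 * v ^ 2))
      = ((ℓ:ℝ) + (m:ℝ)) + 2 * (((ℓ:ℝ) + (m:ℝ)) / (u ^ 2 * v ^ 2 - 1)) := by
    have := id1 ((ℓ:ℝ) + (m:ℝ)) (u * v) (by rw [mul_pow]; exact hAB)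
    rw [mul_pow] at this
    exact this
  rw [idm]
  constructor
  · have h1 : (ℓ:ℝ) / (u ^ 2 * v ^ 2 - 1) < (ℓ:ℝ) / (u ^ 2 - 1) :=
      div_lt_div_of_pos_left hl0 hA (by nlinarith)
    have h2 : (m:ℝ) / (u ^ 2 * v ^ 2 - 1) < (m:ℝ) / (v ^ 2 - 1) :=
      div_lt_div_of_pos_left hm0 hB (by nlinarith)
    have hsplit : ((ℓ:ℝ) + (m:ℝ)) / (u ^ 2 * v ^ 2 - 1)
        = (ℓ:ℝ) / (u ^ 2 * v ^ 2 - 1) + (m:ℝ) / (u ^ 2 * v ^ 2 - 1) := by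
      rw [add_div]
    linarith
  · have hkey := keyB u v ((ℓ:ℝ) * t) ((m:ℝ) * t) hu hv (by positivity) (by positivity) hLu hMv
    have c1 : (ℓ:ℝ) * t / (u ^ 2 - 1) = t * ((ℓ:ℝ) / (u ^ 2 - 1)) := by ring
    have c2 : (m:ℝ) * t / (v ^ 2 - 1) = t * ((m:ℝ) / (v ^ 2 - 1)) := by ring
    have c3 : ((ℓ:ℝ) * t + (m:ℝ) * t) / (u ^ 2 * v ^ 2 - 1)
        = t * (((ℓ:ℝ) + (m:ℝ)) / (u ^ 2 * v ^ 2 - 1)) := by ring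
    rw [c1, c2, c3] at hkey
    have hmul := mul_lt_mul_of_pos_left hkey (by positivity : (0:ℝ) < 2 / t)
    have ht' : t ≠ 0 := ht.ne'
    have expand : 2 / t * (t * ((ℓ:ℝ) / (u ^ 2 - 1)) + t * ((m:ℝ) / (v ^ 2 - 1))
        - t * (((ℓ:ℝ) + (m:ℝ)) / (u ^ 2 * v ^ 2 - 1)))
        = 2 * ((ℓ:ℝ) / (u ^ 2 - 1)) + 2 * ((m:ℝ) / (v ^ 2 - 1))
          - 2 * (((ℓ:ℝ) + (m:ℝ)) / (u ^ 2 * v ^ 2 - 1)) := by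
      field_simp
    rw [expand] at hmul
    have h21 : 2 / t * 1 = 2 / t := mul_one _
    rw [h21] at hmul
    linarith
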